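/- For adjacent simple transpositions s = (i, i+1) and s' = (i+1, i+2) in S_n, the Demazure operators on ℚ[x_1, ..., x_n] satisfy the braid relation D_s ∘ D_{s'} ∘ D_s = D_{s'} ∘ D_s ∘ D_{s'}. -/

import Mathlib

open MvPolynomial
open Classical

/-- The Demazure operator `D_s(p) = (p − s(p))/(x_i − x_j)` on `ℚ[x_1,...,x_n]`. -/
noncomputable def demazure {n : ℕ} (i j : Fin n) (p : MvPolynomial (Fin n) ℚ) :
    MvPolynomial (Fin n) ℚ :=
  if h : ∃ q, p - rename (Equiv.swap i j) p = (X i - X j) * q then h.choose else 0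

lemma dvd_sub_rename_swap {n : ℕ} (i j : Fin n) (p : MvPolynomial (Fin n) ℚ) :
    (X i - X j : MvPolynomial (Fin n) ℚ) ∣ p - rename (Equiv.swap i j) p := by
  induction p using MvPolynomial.induction_on with
  | C a => simp
  | add p q hp hq =>
    rw [map_add]
    have : p + q - (rename (Equiv.swap i j) p + rename (Equiv.swap i j) q)
        = (p - rename (Equiv.swap i j) p) + (q - rename (Equiv.swap i j) q) := by ring
    rw [this]
    exact dvd_add hp hq
  | mul_X p m hp =>
    rw [map_mul, rename_X]
    have key : p * X m - rename (Equiv.swap i j) p * X (Equiv.swap i j m) =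
        (p - rename (Equiv.swap i j) p) * X m +
          rename (Equiv.swap i j) p * (X m - X (Equiv.swap i j m)) := by ring
    rw [key]
    refine dvd_add (hp.mul_right _) (Dvd.dvd.mul_left ?_ _)
    rcases eq_or_ne m i with rfl | hmi
    · rw [Equiv.swap_apply_left]
    · rcases eq_or_ne m j with rfl | hmj
      · rw [Equiv.swap_apply_right]
        exact ⟨-1, by ring⟩
      · rw [Equiv.swap_apply_of_ne_of_ne hmi hmj, sub_self]
        exact dvd_zero _

lemma demazure_spec {n : ℕ} (i j : Fin n) (p : MvPolynomial (Fin n) ℚ) :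
    (X i - X j) * demazure i j p = p - rename (Equiv.swap i j) p := by
  have h : ∃ q, p - rename (Equiv.swap i j) p = (X i - X j) * q :=
    dvd_sub_rename_swap i j p
  rw [demazure, dif_pos h]
  exact h.choose_spec.symm

lemma X_sub_X_ne_zero {n : ℕ} {i j : Fin n} (h : i ≠ j) :
    (X i - X j : MvPolynomial (Fin n) ℚ) ≠ 0 :=
  sub_ne_zero.mpr (fun e => h (X_injective e))

lemma rename_swap_swap {n : ℕ} (i j : Fin n) (p : MvPolynomial (Fin n) ℚ) :
    rename (Equiv.swap i j) (rename (Equiv.swap i j) p) = p := by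
  rw [rename_rename]
  have : (Equiv.swap i j : Fin n → Fin n) ∘ (Equiv.swap i j) = id := by
    funext x; exact Equiv.swap_apply_self i j x
  rw [this, rename_id, AlgHom.id_apply]

/-- For adjacent simple transpositions `s = (i, i+1)` and `s' = (i+1, i+2)`, the Demazure
operators satisfy the braid relation `D_s ∘ D_{s'} ∘ D_s = D_{s'} ∘ D_s ∘ D_{s'}`. -/
theorem stmt_9 {n : ℕ} (i j k : Fin n)
    (hij : (i : ℕ) + 1 = (j : ℕ)) (hjk : (j : ℕ) + 1 = (k : ℕ)) :
    ∀ p : MvPolynomial (Fin n) ℚ,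
      demazure i j (demazure j k (demazure i j p)) =
        demazure j k (demazure i j (demazure j k p)) := by
  intro p
  have hij' : i ≠ j := fun h => by rw [h] at hij; omega
  have hjk' : j ≠ k := fun h => by rw [h] at hjk; omega
  have hik : i ≠ k := fun h => by rw [h] at hij; omega
  -- rename of the linear forms
  have rsa : rename (Equiv.swap i j : Fin n → Fin n) (X i - X j : MvPolynomial (Fin n) ℚ)
      = -(X i - X j) := by
    rw [map_sub, rename_X, rename_X, Equiv.swap_apply_left, Equiv.swap_apply_right]; ring
  have rsb : rename (Equiv.swap i j : Fin n → Fin n) (X j - X k : MvPolynomial (Fin n) ℚ)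
      = X i - X k := by
    rw [map_sub, rename_X, rename_X, Equiv.swap_apply_right,
      Equiv.swap_apply_of_ne_of_ne hik.symm hjk'.symm]
  have rsc : rename (Equiv.swap i j : Fin n → Fin n) (X i - X k : MvPolynomial (Fin n) ℚ)
      = X j - X k := by
    rw [map_sub, rename_X, rename_X, Equiv.swap_apply_left,
      Equiv.swap_apply_of_ne_of_ne hik.symm hjk'.symm]
  have rta : rename (Equiv.swap j k : Fin n → Fin n) (X i - X j : MvPolynomial (Fin n) ℚ)
      = X i - X k := by
    rw [map_sub, rename_X, rename_X, Equiv.swap_apply_left,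
      Equiv.swap_apply_of_ne_of_ne hij' hik]
  have rtb : rename (Equiv.swap j k : Fin n → Fin n) (X j - X k : MvPolynomial (Fin n) ℚ)
      = -(X j - X k) := by
    rw [map_sub, rename_X, rename_X, Equiv.swap_apply_left, Equiv.swap_apply_right]; ring
  have rtc : rename (Equiv.swap j k : Fin n → Fin n) (X i - X k : MvPolynomial (Fin n) ℚ)
      = X i - X j := by
    rw [map_sub, rename_X, rename_X, Equiv.swap_apply_right,
      Equiv.swap_apply_of_ne_of_ne hij' hik]
  -- braid relation on the swaps themselves
  have hbraid : rename (Equiv.swap i j : Fin n → Fin n)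
      (rename (Equiv.swap j k : Fin n → Fin n) (rename (Equiv.swap i j : Fin n → Fin n) p)) =
      rename (Equiv.swap j k : Fin n → Fin n)
      (rename (Equiv.swap i j : Fin n → Fin n) (rename (Equiv.swap j k : Fin n → Fin n) p)) := by
    have e1 : Equiv.swap j i * Equiv.swap k j * Equiv.swap j i = Equiv.swap i k :=
      Equiv.swap_mul_swap_mul_swap hjk'.symm (Ne.symm hik)
    have e2 : Equiv.swap j k * Equiv.swap i j * Equiv.swap j k = Equiv.swap k i :=
      Equiv.swap_mul_swap_mul_swap hij' hik
    have e1' : Equiv.swap i j * Equiv.swap j k * Equiv.swap i j = Equiv.swap i k := by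
      rw [Equiv.swap_comm i j, Equiv.swap_comm j k]; exact e1
    have hperm : Equiv.swap i j * Equiv.swap j k * Equiv.swap i j =
        Equiv.swap j k * Equiv.swap i j * Equiv.swap j k :=
      e1'.trans (e2.trans (Equiv.swap_comm k i)).symm
    have hfun : ((Equiv.swap i j : Fin n → Fin n) ∘ (Equiv.swap j k : Fin n → Fin n)) ∘
          (Equiv.swap i j : Fin n → Fin n) =
        ((Equiv.swap j k : Fin n → Fin n) ∘ (Equiv.swap i j : Fin n → Fin n)) ∘
          (Equiv.swap j k : Fin n → Fin n) := by
      rw [← Equiv.Perm.coe_mul, ← Equiv.Perm.coe_mul, ← Equiv.Perm.coe_mul,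
        ← Equiv.Perm.coe_mul, hperm]
    rw [rename_rename, rename_rename, rename_rename, rename_rename, hfun]
  set s : Equiv.Perm (Fin n) := Equiv.swap i j with hs
  set t : Equiv.Perm (Fin n) := Equiv.swap j k with ht
  set a : MvPolynomial (Fin n) ℚ := X i - X j with ha
  set b : MvPolynomial (Fin n) ℚ := X j - X k with hb
  set c : MvPolynomial (Fin n) ℚ := X i - X k with hc
  set D1 := demazure i j p with hD1def
  set D2 := demazure j k D1 with hD2def
  set D3 := demazure i j D2 with hD3def
  set E1 := demazure j k p with hE1def
  set E2 := demazure i j E1 with hE2def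
  set E3 := demazure j k E2 with hE3def
  have h1 : a * D1 = p - rename (s : Fin n → Fin n) p := demazure_spec i j p
  have h2 : b * D2 = D1 - rename (t : Fin n → Fin n) D1 := demazure_spec j k D1
  have h3 : a * D3 = D2 - rename (s : Fin n → Fin n) D2 := demazure_spec i j D2
  have g1 : b * E1 = p - rename (t : Fin n → Fin n) p := demazure_spec j k p
  have g2 : a * E2 = E1 - rename (s : Fin n → Fin n) E1 := demazure_spec i j E1
  have g3 : b * E3 = E2 - rename (t : Fin n → Fin n) E2 := demazure_spec j k E2
  have hane : a ≠ 0 := X_sub_X_ne_zero hij'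
  have hbne : b ≠ 0 := X_sub_X_ne_zero hjk'
  have hcne : c ≠ 0 := X_sub_X_ne_zero hik
  -- D1 is s-invariant
  have h1s := congrArg (rename (s : Fin n → Fin n)) h1
  rw [map_mul, rsa, map_sub, rename_swap_swap] at h1s
  have hsD1 : rename (s : Fin n → Fin n) D1 = D1 := by
    apply mul_left_cancel₀ hane
    rw [h1]
    linear_combination -h1s
  -- E1 is t-invariant
  have g1t := congrArg (rename (t : Fin n → Fin n)) g1
  rw [map_mul, rtb, map_sub, rename_swap_swap] at g1t
  have htE1 : rename (t : Fin n → Fin n) E1 = E1 := by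
    apply mul_left_cancel₀ hbne
    rw [g1]
    linear_combination -g1t
  -- auxiliary renamed identities (D side)
  have r1t := congrArg (rename (t : Fin n → Fin n)) h1
  rw [map_mul, rta, map_sub] at r1t
  -- c * tD1 = tp - tsp
  have r2s := congrArg (rename (s : Fin n → Fin n)) h2
  rw [map_mul, rsb, map_sub, hsD1] at r2s
  -- c * sD2 = D1 - stD1
  have r1ts := congrArg (rename (s : Fin n → Fin n)) r1t
  rw [map_mul, rsc, map_sub] at r1ts
  -- b * stD1 = stp - stsp
  -- auxiliary renamed identities (E side)
  have q1s := congrArg (rename (s : Fin n → Fin n)) g1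
  rw [map_mul, rsb, map_sub] at q1s
  -- c * sE1 = sp - stp
  have q2t := congrArg (rename (t : Fin n → Fin n)) g2
  rw [map_mul, rta, map_sub, htE1] at q2t
  -- c * tE2 = E1 - tsE1
  have q1st := congrArg (rename (t : Fin n → Fin n)) q1s
  rw [map_mul, rtc, map_sub] at q1st
  -- a * tsE1 = tsp - tstp
  have key : a * (b * (c * D3)) = a * (b * (c * E3)) := by
    linear_combination (b*c) * h3 + c * h2 - r1t - b * r2s + r1ts + h1
      - (a*c) * g3 - (a+b) * g2 + q1s + a * q2t - q1st - g1 - hbraid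
  have k1 := mul_left_cancel₀ hane key
  have k2 := mul_left_cancel₀ hbne k1
  exact mul_left_cancel₀ hcne k2
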